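/- Set c_i = 1/i. Then for every x ∈ (0, 1], with k_n = ⌊nx⌋, the ratio (Σ_{i=1}^{k_n} 1/i) / (Σ_{i=1}^{n} 1/i) → 1 as n → ∞. Consequently the measures α_n = Σ_{i=1}^n ((1/i) / Σ_{j=1}^n (1/j)) δ_{i/n} on [0,1] converge weakly to the Dirac measure concentrated at the point 0. -/

import Mathlib

open Filter Topology


noncomputable def harmSum (n : ℕ) : ℝ := ∑ i ∈ Finset.Icc 1 n, (1 : ℝ) / i

lemma harmSum_eq_range (n : ℕ) :
    harmSum n = ∑ i ∈ Finset.range n, (1 : ℝ) / (i + 1) := by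
  rw [harmSum, ← Finset.Ico_add_one_right_eq_Icc, Finset.sum_Ico_eq_sum_range]
  refine Finset.sum_congr (by simp) fun i _ => ?_
  push_cast
  ring

lemma harmSum_mono : Monotone harmSum := fun m n h =>
  Finset.sum_le_sum_of_subset_of_nonneg (Finset.Icc_subset_Icc_right h)
    (fun i _ _ => by positivity)

lemma one_le_harmSum {n : ℕ} (hn : 1 ≤ n) : 1 ≤ harmSum n := by
  have := Finset.single_le_sum (f := fun i : ℕ => (1 : ℝ) / i)
    (fun i _ => by positivity) (Finset.mem_Icc.mpr ⟨le_refl 1, hn⟩)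
  simpa [harmSum] using this

lemma harmSum_pos {n : ℕ} (hn : 1 ≤ n) : 0 < harmSum n :=
  lt_of_lt_of_le one_pos (one_le_harmSum hn)

lemma harmSum_tendsto : Tendsto harmSum atTop atTop :=
  Real.tendsto_sum_range_one_div_nat_succ_atTop.congr
    fun n => (harmSum_eq_range n).symm

lemma harmSum_sub_le {m n : ℕ} (hm : 1 ≤ m) (hmn : m ≤ n) :
    harmSum n - harmSum m ≤ Real.log n - Real.log m := by
  rw [harmSum_eq_range, harmSum_eq_range, ← Finset.sum_Ico_eq_sub _ hmn]
  have key : ∀ i ∈ Finset.Ico m n, (1 : ℝ) / (i + 1) ≤ Real.log (i + 1) - Real.log i := by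
    intro i hi
    have hi1 : (1 : ℝ) ≤ i := by exact_mod_cast hm.trans (Finset.mem_Ico.mp hi).1
    have hipos : (0 : ℝ) < i := lt_of_lt_of_le one_pos hi1
    have h1 : Real.log ((i : ℝ) / (i + 1)) ≤ (i : ℝ) / (i + 1) - 1 :=
      Real.log_le_sub_one_of_pos (by positivity)
    have h2 : Real.log ((i : ℝ) / (i + 1)) = Real.log i - Real.log (i + 1) :=
      Real.log_div (ne_of_gt hipos) (by positivity)
    have h3 : (i : ℝ) / (i + 1) - 1 = -(1 / (i + 1)) := by field_simp; ring
    linarith [h2 ▸ h1]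
  calc ∑ i ∈ Finset.Ico m n, (1 : ℝ) / (i + 1)
      ≤ ∑ i ∈ Finset.Ico m n, (Real.log (i + 1) - Real.log i) := Finset.sum_le_sum key
    _ = Real.log n - Real.log m := by
        have t : ∀ p : ℕ, ∑ i ∈ Finset.range p, (Real.log ((i : ℝ) + 1) - Real.log i)
            = Real.log p := by
          intro p
          have := Finset.sum_range_sub (f := fun i : ℕ => Real.log i) (n := p)
          simpa using this
        rw [Finset.sum_Ico_eq_sub _ hmn, t n, t m]

lemma tail_tendsto {x : ℝ} (hx0 : 0 < x) (hx1 : x ≤ 1) :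
    Tendsto (fun n : ℕ => (harmSum n - harmSum ⌊(n : ℝ) * x⌋₊) / harmSum n)
      atTop (𝓝 0) := by
  have hdiv : Tendsto (fun n : ℕ => Real.log (2 / x) / harmSum n) atTop (𝓝 0) :=
    tendsto_const_nhds.div_atTop harmSum_tendsto
  refine tendsto_of_tendsto_of_tendsto_of_le_of_le' tendsto_const_nhds hdiv ?_ ?_
  · filter_upwards [eventually_ge_atTop 1] with n hn
    have hk : ⌊(n : ℝ) * x⌋₊ ≤ n := by
      have h1 : (n : ℝ) * x ≤ n := mul_le_of_le_one_right (Nat.cast_nonneg n) hx1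
      calc ⌊(n : ℝ) * x⌋₊ ≤ ⌊(n : ℝ)⌋₊ := Nat.floor_mono h1
        _ = n := Nat.floor_natCast n
    have h1 := harmSum_pos hn
    have h2 : harmSum ⌊(n : ℝ) * x⌋₊ ≤ harmSum n := harmSum_mono hk
    exact div_nonneg (by linarith) h1.le
  · have hev : ∀ᶠ n : ℕ in atTop, (2 : ℝ) ≤ (n : ℝ) * x := by
      have := (tendsto_natCast_atTop_atTop (R := ℝ)).atTop_mul_const hx0
      exact this.eventually_ge_atTop 2
    filter_upwards [hev, eventually_ge_atTop 1] with n hn2 hn1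
    set k := ⌊(n : ℝ) * x⌋₊ with hkdef
    have hk1 : 1 ≤ k := Nat.le_floor (by push_cast; linarith)
    have hkn : k ≤ n := by
      have h1 : (n : ℝ) * x ≤ n := mul_le_of_le_one_right (Nat.cast_nonneg n) hx1
      calc k ≤ ⌊(n : ℝ)⌋₊ := Nat.floor_mono h1
        _ = n := Nat.floor_natCast n
    have hkl : (n : ℝ) * x / 2 ≤ k := by
      have := Nat.sub_one_lt_floor ((n : ℝ) * x)
      linarith
    have hkpos : (0 : ℝ) < k := by
      have : (1:ℝ) ≤ (k:ℝ) := by exact_mod_cast hk1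
      linarith
    have hn0 : (0 : ℝ) < n := by
      have : (1:ℝ) ≤ (n:ℝ) := by exact_mod_cast hn1
      linarith
    have hle : harmSum n - harmSum k ≤ Real.log (2 / x) := by
      have hsub := harmSum_sub_le hk1 hkn
      have hlog : Real.log n - Real.log k ≤ Real.log (2 / x) := by
        rw [← Real.log_div hn0.ne' hkpos.ne']
        apply Real.log_le_log (by positivity)
        rw [div_le_div_iff₀ hkpos hx0]
        linarith
      linarith
    have h1 := harmSum_pos hn1
    gcongr

lemma ratio_tendsto {x : ℝ} (hx0 : 0 < x) (hx1 : x ≤ 1) :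
    Tendsto (fun n : ℕ => harmSum ⌊(n : ℝ) * x⌋₊ / harmSum n) atTop (𝓝 1) := by
  have h := (tendsto_const_nhds (x := (1 : ℝ)) (f := atTop)).sub (tail_tendsto hx0 hx1)
  rw [sub_zero] at h
  refine h.congr' ?_
  filter_upwards [eventually_ge_atTop 1] with n hn
  have h1 := harmSum_pos hn
  field_simp
  ring

/-- Set `c i = 1 / i`.  For every `x ∈ (0, 1]`, with `k_n = ⌊n*x⌋`,
`(Σ_{i=1}^{k_n} 1/i) / (Σ_{i=1}^n 1/i) → 1`.  Consequently, the measures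
`α_n = Σ_{i=1}^n ((1/i) / Σ_{j=1}^n (1/j)) δ_{i/n}` converge weakly to the Dirac measure
concentrated at the point `0`. -/
theorem harmonic_coefficients_concentrate_at_zero :
    (∀ x : ℝ, x ∈ Set.Ioc (0 : ℝ) 1 →
      Tendsto (fun n : ℕ =>
          (∑ i ∈ Finset.Icc 1 ⌊(n : ℝ) * x⌋₊, (1 : ℝ) / i)
            / ∑ i ∈ Finset.Icc 1 n, (1 : ℝ) / i)
        atTop (𝓝 1)) ∧
    (∀ h : ℝ → ℝ, Continuous h → (∃ C, ∀ x, |h x| ≤ C) →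
      Tendsto (fun n : ℕ => ∑ i ∈ Finset.Icc 1 n,
          h ((i : ℝ) / (n : ℝ)) * (((1 : ℝ) / i) / ∑ j ∈ Finset.Icc 1 n, (1 : ℝ) / j))
        atTop (𝓝 (h 0))) := by
  constructor
  · rintro x ⟨hx0, hx1⟩
    exact ratio_tendsto hx0 hx1
  · rintro h hc ⟨C, hC⟩
    have hC0 : 0 ≤ C := (abs_nonneg _).trans (hC 0)
    rw [Metric.tendsto_nhds]
    intro ε hε
    obtain ⟨δ, hδ0, hδ⟩ := Metric.continuousAt_iff.mp hc.continuousAt (ε / 2) (by linarith)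
    set d : ℝ := min (δ / 2) 1 with hd
    have hd0 : 0 < d := lt_min (by linarith) one_pos
    have hd1 : d ≤ 1 := min_le_right _ _
    set ε' : ℝ := ε / (4 * (C + 1)) with hε'
    have hε'0 : 0 < ε' := by positivity
    have hev1 : ∀ᶠ n : ℕ in atTop,
        (harmSum n - harmSum ⌊(n : ℝ) * d⌋₊) / harmSum n < ε' :=
      (tail_tendsto hd0 hd1).eventually_lt_const hε'0
    have hev2 : ∀ᶠ n : ℕ in atTop, (1 : ℝ) ≤ (n : ℝ) * d := by
      have := (tendsto_natCast_atTop_atTop (R := ℝ)).atTop_mul_const hd0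
      exact this.eventually_ge_atTop 1
    filter_upwards [hev1, hev2, eventually_ge_atTop 1] with n htn hnd hn1
    set k := ⌊(n : ℝ) * d⌋₊ with hk
    have hk1 : 1 ≤ k := Nat.le_floor (by push_cast; linarith)
    have hkn : k ≤ n := by
      have h1 : (n : ℝ) * d ≤ n := mul_le_of_le_one_right (Nat.cast_nonneg n) hd1
      calc k ≤ ⌊(n : ℝ)⌋₊ := Nat.floor_mono h1
        _ = n := Nat.floor_natCast n
    have hHn : (0 : ℝ) < harmSum n := harmSum_pos hn1
    have hHkn : harmSum k ≤ harmSum n := harmSum_mono hkn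
    have hn0 : (0 : ℝ) < n := by
      have : (1 : ℝ) ≤ (n : ℝ) := by exact_mod_cast hn1
      linarith
    have hunion : Finset.Icc 1 k ∪ Finset.Ioc k n = Finset.Icc 1 n := by
      rw [← Finset.coe_inj, Finset.coe_union, Finset.coe_Icc, Finset.coe_Ioc, Finset.coe_Icc,
        Set.Icc_union_Ioc_eq_Icc hk1 hkn]
    have hdisj : Disjoint (Finset.Icc 1 k) (Finset.Ioc k n) := by
      rw [Finset.disjoint_left]
      intro i hi hi'
      exact absurd (Finset.mem_Icc.mp hi).2 (not_le.mpr (Finset.mem_Ioc.mp hi').1)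
    have hsplit : harmSum k + ∑ i ∈ Finset.Ioc k n, (1 : ℝ) / i = harmSum n := by
      rw [harmSum, harmSum, ← hunion, Finset.sum_union hdisj]
    have hHS : ∑ j ∈ Finset.Icc 1 n, (1 : ℝ) / j = harmSum n := rfl
    have hw : ∑ i ∈ Finset.Icc 1 n, ((1 : ℝ) / i) / harmSum n = 1 := by
      rw [← Finset.sum_div, ← harmSum, div_self hHn.ne']
    have hdiff : (∑ i ∈ Finset.Icc 1 n, h ((i : ℝ) / n) * (((1 : ℝ) / i) / harmSum n)) - h 0
        = ∑ i ∈ Finset.Icc 1 n, (h ((i : ℝ) / n) - h 0) * (((1 : ℝ) / i) / harmSum n) := by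
      simp only [sub_mul, Finset.sum_sub_distrib, ← Finset.mul_sum, hw, mul_one]
    rw [hHS, Real.dist_eq, hdiff]
    -- bound the head part
    have bound1 : ∑ i ∈ Finset.Icc 1 k,
        |(h ((i : ℝ) / n) - h 0) * (((1 : ℝ) / i) / harmSum n)|
        ≤ (ε / 2) * (harmSum k / harmSum n) := by
      have step : ∀ i ∈ Finset.Icc 1 k,
          |(h ((i : ℝ) / n) - h 0) * (((1 : ℝ) / i) / harmSum n)|
          ≤ (ε / 2) * (((1 : ℝ) / i) / harmSum n) := by
        intro i hi
        obtain ⟨hi1, hik⟩ := Finset.mem_Icc.mp hi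
        have hwnn : (0 : ℝ) ≤ ((1 : ℝ) / i) / harmSum n := by positivity
        rw [abs_mul, abs_of_nonneg hwnn]
        refine mul_le_mul_of_nonneg_right ?_ hwnn
        have hin : (i : ℝ) / n ≤ d := by
          have h1 : (i : ℝ) ≤ k := Nat.cast_le.mpr hik
          have h2 : (k : ℝ) ≤ n * d := Nat.floor_le (by positivity)
          rw [div_le_iff₀ hn0]
          nlinarith
        have hdist : dist ((i : ℝ) / n) 0 < δ := by
          rw [Real.dist_eq, sub_zero, abs_of_nonneg (by positivity)]
          calc (i : ℝ) / n ≤ d := hin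
            _ ≤ δ / 2 := min_le_left _ _
            _ < δ := by linarith
        have := hδ hdist
        rw [Real.dist_eq] at this
        linarith
      calc ∑ i ∈ Finset.Icc 1 k, |(h ((i : ℝ) / n) - h 0) * (((1 : ℝ) / i) / harmSum n)|
          ≤ ∑ i ∈ Finset.Icc 1 k, (ε / 2) * (((1 : ℝ) / i) / harmSum n) :=
            Finset.sum_le_sum step
        _ = (ε / 2) * (harmSum k / harmSum n) := by
            rw [← Finset.mul_sum, ← Finset.sum_div, ← harmSum]
    have bound2 : ∑ i ∈ Finset.Ioc k n,
        |(h ((i : ℝ) / n) - h 0) * (((1 : ℝ) / i) / harmSum n)|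
        ≤ (2 * C) * ((harmSum n - harmSum k) / harmSum n) := by
      have step : ∀ i ∈ Finset.Ioc k n,
          |(h ((i : ℝ) / n) - h 0) * (((1 : ℝ) / i) / harmSum n)|
          ≤ (2 * C) * (((1 : ℝ) / i) / harmSum n) := by
        intro i hi
        have hwnn : (0 : ℝ) ≤ ((1 : ℝ) / i) / harmSum n := by positivity
        rw [abs_mul, abs_of_nonneg hwnn]
        refine mul_le_mul_of_nonneg_right ?_ hwnn
        calc |h ((i : ℝ) / n) - h 0| ≤ |h ((i : ℝ) / n)| + |h 0| := abs_sub _ _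
          _ ≤ 2 * C := by have := hC ((i : ℝ) / n); have := hC 0; linarith
      calc ∑ i ∈ Finset.Ioc k n, |(h ((i : ℝ) / n) - h 0) * (((1 : ℝ) / i) / harmSum n)|
          ≤ ∑ i ∈ Finset.Ioc k n, (2 * C) * (((1 : ℝ) / i) / harmSum n) :=
            Finset.sum_le_sum step
        _ = (2 * C) * ((harmSum n - harmSum k) / harmSum n) := by
            rw [← Finset.mul_sum, ← Finset.sum_div]
            congr 2
            linarith [hsplit]
    have habs : |∑ i ∈ Finset.Icc 1 n, (h ((i : ℝ) / n) - h 0) * (((1 : ℝ) / i) / harmSum n)|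
        ≤ (ε / 2) * (harmSum k / harmSum n)
          + (2 * C) * ((harmSum n - harmSum k) / harmSum n) := by
      calc |∑ i ∈ Finset.Icc 1 n, (h ((i : ℝ) / n) - h 0) * (((1 : ℝ) / i) / harmSum n)|
          ≤ ∑ i ∈ Finset.Icc 1 n, |(h ((i : ℝ) / n) - h 0) * (((1 : ℝ) / i) / harmSum n)| :=
            Finset.abs_sum_le_sum_abs _ _
        _ = (∑ i ∈ Finset.Icc 1 k, |(h ((i : ℝ) / n) - h 0) * (((1 : ℝ) / i) / harmSum n)|)
            + ∑ i ∈ Finset.Ioc k n, |(h ((i : ℝ) / n) - h 0) * (((1 : ℝ) / i) / harmSum n)| := by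
            rw [← hunion, Finset.sum_union hdisj]
        _ ≤ _ := add_le_add bound1 bound2
    have hratio : harmSum k / harmSum n ≤ 1 := div_le_one_of_le₀ hHkn hHn.le
    have htail0 : 2 * C * ((harmSum n - harmSum k) / harmSum n) ≤ 2 * C * ε' :=
      mul_le_mul_of_nonneg_left htn.le (by positivity)
    have hlast : 2 * C * ε' < ε / 2 := by
      rw [hε', show 2 * C * (ε / (4 * (C + 1))) = 2 * C * ε / (4 * (C + 1)) by ring,
        div_lt_div_iff₀ (by positivity) (by norm_num)]
      nlinarith
    have h1 : (ε / 2) * (harmSum k / harmSum n) ≤ ε / 2 := by nlinarith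
    linarith [habs]
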